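/- For all ψ, θ, φ ∈ ℝ and u ∈ ℝ³, one has (as 2×2 complex matrices) exp((iψ/2)σ₃)·exp((iθ/2)σ₁)·exp((iφ/2)σ₃)·(u·σ)·exp(−(iφ/2)σ₃)·exp(−(iθ/2)σ₁)·exp(−(iψ/2)σ₃) = (R₃(ψ)·R₁(θ)·R₃(φ)·u)·σ. -/

import Mathlib

open Matrix

/-- The Pauli matrices. -/
noncomputable def pauli1 : Matrix (Fin 2) (Fin 2) ℂ := !![0, 1; 1, 0]
noncomputable def pauli2 : Matrix (Fin 2) (Fin 2) ℂ := !![0, -Complex.I; Complex.I, 0]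
noncomputable def pauli3 : Matrix (Fin 2) (Fin 2) ℂ := !![1, 0; 0, -1]

/-- For `v ∈ ℝ³`, the matrix `v·σ = v₁σ₁ + v₂σ₂ + v₃σ₃`. -/
noncomputable def pauliDot (v : Fin 3 → ℝ) : Matrix (Fin 2) (Fin 2) ℂ :=
  (v 0 : ℂ) • pauli1 + (v 1 : ℂ) • pauli2 + (v 2 : ℂ) • pauli3

/-- Rotation about the first axis. -/
noncomputable def R1 (q : ℝ) : Matrix (Fin 3) (Fin 3) ℝ :=
  !![1, 0, 0;
     0, Real.cos q, Real.sin q;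
     0, -Real.sin q, Real.cos q]

/-- Rotation about the third axis. -/
noncomputable def R3 (q : ℝ) : Matrix (Fin 3) (Fin 3) ℝ :=
  !![Real.cos q, Real.sin q, 0;
     -Real.sin q, Real.cos q, 0;
     0, 0, 1]

lemma exp3 (z : ℂ) : NormedSpace.exp (z • pauli3) =
    !![Complex.exp z, 0; 0, Complex.exp (-z)] := by
  have h : z • pauli3 = Matrix.diagonal ![z, -z] := by
    ext i j
    fin_cases i <;> fin_cases j <;> simp [pauli3, Matrix.diagonal]
  rw [h, Matrix.exp_diagonal, Pi.exp_def]
  ext i j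
  fin_cases i <;> fin_cases j <;>
    simp [Matrix.diagonal, ← Complex.exp_eq_exp_ℂ]

lemma exp1 (z : ℂ) : NormedSpace.exp (z • pauli1) =
    !![(Complex.exp z + Complex.exp (-z))/2, (Complex.exp z - Complex.exp (-z))/2;
       (Complex.exp z - Complex.exp (-z))/2, (Complex.exp z + Complex.exp (-z))/2] := by
  have hU : IsUnit (!![1, 1; 1, -1] : Matrix (Fin 2) (Fin 2) ℂ) := by
    apply (Matrix.isUnit_iff_isUnit_det _).2
    simp [Matrix.det_fin_two_of]
    norm_num
  have hinv : (!![1, 1; 1, -1] : Matrix (Fin 2) (Fin 2) ℂ)⁻¹ =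
      !![1/2, 1/2; 1/2, -(1/2)] := by
    apply Matrix.inv_eq_right_inv
    ext i j
    fin_cases i <;> fin_cases j <;>
      simp [Matrix.mul_apply, Fin.sum_univ_two] <;> ring
  have hc : z • pauli1 =
      !![1, 1; 1, -1] * (z • pauli3) * (!![1, 1; 1, -1] : Matrix (Fin 2) (Fin 2) ℂ)⁻¹ := by
    rw [hinv]
    ext i j
    fin_cases i <;> fin_cases j <;>
      simp [pauli1, pauli3, Matrix.mul_apply, Fin.sum_univ_two] <;> ring
  rw [hc, Matrix.exp_conj _ _ hU, exp3, hinv]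
  ext i j
  fin_cases i <;> fin_cases j <;>
    simp [Matrix.mul_apply, Fin.sum_univ_two] <;> ring

lemma exp3R (t : ℝ) : NormedSpace.exp ((Complex.I * t) • pauli3) =
    !![(Real.cos t : ℂ) + Real.sin t * Complex.I, 0;
       0, (Real.cos t : ℂ) - Real.sin t * Complex.I] := by
  rw [exp3]
  have h1 : Complex.I * (t : ℂ) = (t : ℂ) * Complex.I := mul_comm _ _
  rw [h1, Complex.exp_mul_I, ← neg_mul, ← Complex.ofReal_neg, Complex.exp_mul_I]
  simp [← Complex.ofReal_cos, ← Complex.ofReal_sin, Real.cos_neg, Real.sin_neg, sub_eq_add_neg]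

lemma exp1R (t : ℝ) : NormedSpace.exp ((Complex.I * t) • pauli1) =
    !![(Real.cos t : ℂ), Real.sin t * Complex.I;
       Real.sin t * Complex.I, (Real.cos t : ℂ)] := by
  rw [exp1]
  have h1 : Complex.I * (t : ℂ) = (t : ℂ) * Complex.I := mul_comm _ _
  rw [h1, Complex.exp_mul_I, ← neg_mul, ← Complex.ofReal_neg, Complex.exp_mul_I]
  simp only [← Complex.ofReal_cos, ← Complex.ofReal_sin, Real.cos_neg, Real.sin_neg]
  ext i j
  fin_cases i <;> fin_cases j <;> simp <;> push_cast <;> ring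

lemma oreal_pow_re (x : ℝ) (n : ℕ) : ((x:ℂ)^n).re = x^n := by
  rw [← Complex.ofReal_pow, Complex.ofReal_re]

lemma oreal_pow_im (x : ℝ) (n : ℕ) : ((x:ℂ)^n).im = 0 := by
  rw [← Complex.ofReal_pow, Complex.ofReal_im]

lemma smul_half3 (q : ℝ) : (Complex.I * ((q:ℂ) / 2)) • pauli3 = (Complex.I * ((q/2 : ℝ):ℂ)) • pauli3 := by
  push_cast; ring_nf

lemma negsmul3 (q : ℝ) : (-(Complex.I * ((q:ℂ)/2))) • pauli3 = (Complex.I * ((-(q/2) : ℝ):ℂ)) • pauli3 := by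
  push_cast; ring_nf

lemma smul_half1 (q : ℝ) : (Complex.I * ((q:ℂ) / 2)) • pauli1 = (Complex.I * ((q/2 : ℝ):ℂ)) • pauli1 := by
  push_cast; ring_nf

lemma negsmul1 (q : ℝ) : (-(Complex.I * ((q:ℂ)/2))) • pauli1 = (Complex.I * ((-(q/2) : ℝ):ℂ)) • pauli1 := by
  push_cast; ring_nf

lemma conj3 (q : ℝ) (v : Fin 3 → ℝ) :
    NormedSpace.exp ((Complex.I * (q / 2)) • pauli3) * pauliDot v *
      NormedSpace.exp ((-(Complex.I * (q / 2))) • pauli3) =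
    pauliDot ((R3 q).mulVec v) := by
  rw [smul_half3, negsmul3, exp3R, exp3R]
  have hq : q = q/2 + q/2 := by ring
  have hs : Real.sin q = 2 * Real.sin (q/2) * Real.cos (q/2) := by
    rw [hq, Real.sin_add]; ring
  have hc : Real.cos q = Real.cos (q/2)^2 - Real.sin (q/2)^2 := by
    rw [hq, Real.cos_add]; ring
  have hp := Real.sin_sq_add_cos_sq (q/2)
  have h0 : (Real.sin (q/2)^2 + Real.cos (q/2)^2) * v 0 = v 0 := by rw [hp]; ring
  have h1 : (Real.sin (q/2)^2 + Real.cos (q/2)^2) * v 1 = v 1 := by rw [hp]; ring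
  have h2 : (Real.sin (q/2)^2 + Real.cos (q/2)^2) * v 2 = v 2 := by rw [hp]; ring
  ext i j
  fin_cases i <;> fin_cases j <;>
    · simp [pauliDot, pauli1, pauli2, pauli3, Matrix.mul_apply, Fin.sum_univ_two,
        Matrix.mulVec, dotProduct, Fin.sum_univ_three, R3, hs, hc,
        Real.cos_neg, Real.sin_neg, Complex.ext_iff,
        -Complex.ofReal_cos, -Complex.ofReal_sin]
      push_cast [-Complex.ofReal_cos, -Complex.ofReal_sin]
      try simp only [oreal_pow_re, oreal_pow_im]
      repeat' constructor
      all_goals try ring_nf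
      all_goals try ring_nf at h0 h1 h2
      all_goals (first | ring1 | linear_combination h0 | linear_combination h1 | linear_combination h2 | linear_combination -h0 | linear_combination -h1 | linear_combination -h2)

lemma conj1 (q : ℝ) (v : Fin 3 → ℝ) :
    NormedSpace.exp ((Complex.I * (q / 2)) • pauli1) * pauliDot v *
      NormedSpace.exp ((-(Complex.I * (q / 2))) • pauli1) =
    pauliDot ((R1 q).mulVec v) := by
  rw [smul_half1, negsmul1, exp1R, exp1R]
  have hq : q = q/2 + q/2 := by ring
  have hs : Real.sin q = 2 * Real.sin (q/2) * Real.cos (q/2) := by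
    rw [hq, Real.sin_add]; ring
  have hc : Real.cos q = Real.cos (q/2)^2 - Real.sin (q/2)^2 := by
    rw [hq, Real.cos_add]; ring
  have hp := Real.sin_sq_add_cos_sq (q/2)
  have h0 : (Real.sin (q/2)^2 + Real.cos (q/2)^2) * v 0 = v 0 := by rw [hp]; ring
  have h1 : (Real.sin (q/2)^2 + Real.cos (q/2)^2) * v 1 = v 1 := by rw [hp]; ring
  have h2 : (Real.sin (q/2)^2 + Real.cos (q/2)^2) * v 2 = v 2 := by rw [hp]; ring
  ext i j
  fin_cases i <;> fin_cases j <;>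
    · simp [pauliDot, pauli1, pauli2, pauli3, Matrix.mul_apply, Fin.sum_univ_two,
        Matrix.mulVec, dotProduct, Fin.sum_univ_three, R1, hs, hc,
        Real.cos_neg, Real.sin_neg, Complex.ext_iff,
        -Complex.ofReal_cos, -Complex.ofReal_sin]
      push_cast [-Complex.ofReal_cos, -Complex.ofReal_sin]
      try simp only [oreal_pow_re, oreal_pow_im]
      repeat' constructor
      all_goals try ring_nf
      all_goals try ring_nf at h0 h1 h2
      all_goals (first | ring1 | linear_combination h0 | linear_combination h1 | linear_combination h2 | linear_combination -h0 | linear_combination -h1 | linear_combination -h2)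


/-- Euler-angle form of the unitary implementing a rotation:
`exp((iψ/2)σ₃)·exp((iθ/2)σ₁)·exp((iφ/2)σ₃)·(u·σ)·exp(−(iφ/2)σ₃)·exp(−(iθ/2)σ₁)·exp(−(iψ/2)σ₃)
 = (R₃(ψ)·R₁(θ)·R₃(φ)·u)·σ`. -/
theorem stmt_17 (ψ θ φ : ℝ) (u : Fin 3 → ℝ) :
    NormedSpace.exp ((Complex.I * (ψ / 2)) • pauli3) *
    NormedSpace.exp ((Complex.I * (θ / 2)) • pauli1) *
    NormedSpace.exp ((Complex.I * (φ / 2)) • pauli3) *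
    pauliDot u *
    NormedSpace.exp ((-(Complex.I * (φ / 2))) • pauli3) *
    NormedSpace.exp ((-(Complex.I * (θ / 2))) • pauli1) *
    NormedSpace.exp ((-(Complex.I * (ψ / 2))) • pauli3) =
    pauliDot ((R3 ψ * R1 θ * R3 φ).mulVec u) := by
  calc
    _ = NormedSpace.exp ((Complex.I * (ψ / 2)) • pauli3) *
        (NormedSpace.exp ((Complex.I * (θ / 2)) • pauli1) *
         (NormedSpace.exp ((Complex.I * (φ / 2)) • pauli3) * pauliDot u *
          NormedSpace.exp ((-(Complex.I * (φ / 2))) • pauli3)) *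
         NormedSpace.exp ((-(Complex.I * (θ / 2))) • pauli1)) *
        NormedSpace.exp ((-(Complex.I * (ψ / 2))) • pauli3) := by
      simp only [mul_assoc]
    _ = pauliDot ((R3 ψ * R1 θ * R3 φ).mulVec u) := by
      rw [conj3 φ u, conj1 θ _, conj3 ψ _, Matrix.mulVec_mulVec, Matrix.mulVec_mulVec]
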